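/- arXiv:2603.20329 — 2 statements merged into one kernel-verified Lean document; each statement's English description precedes it below -/
import Mathlib

section
/- Let (Ω, 𝒜, ν₀) be a probability space and h ∈ L^∞(ν₀) with ∫ h dν₀ = 0. Define Z(h) = ∫ e^h dν₀ and the probability density w_h = e^h / Z(h). Then for any ξ ∈ L^∞(ν₀) with ∫ ξ dν₀ = 0, the map ε ↦ w_{h+εξ} is differentiable at ε = 0 in L^1(ν₀), with derivative w_h · (ξ − E_{ρ_h}[ξ]), where E_{ρ_h}[ξ] = ∫ ξ w_h dν₀. -/
open MeasureTheory Filter Topology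

theorem exp_norm_scalar_bound (M' B ε Z₀ Z₁ Zε ξx hx R S : ℝ)
    (hM : 1 ≤ M') (hBdef : B = Real.exp M')
    (hε1 : |ε| ≤ 1)
    (hR : |R| ≤ ε ^ 2 * M' ^ 2)
    (hS : |S| ≤ ε ^ 2 * M' ^ 2 * B)
    (hZ0l : Real.exp (-M') ≤ Z₀) (hZ0u : Z₀ ≤ B)
    (hZ1 : |Z₁| ≤ M' * B)
    (hZel : Real.exp (-(2 * M')) ≤ Zε)
    (hξx : |ξx| ≤ M') (hhx : |hx| ≤ M') :
    |Real.exp hx * (R * Z₀ ^ 2 - S * Z₀ - ε * (ξx * Z₀ - Z₁) * (ε * Z₁ + S)) / (Zε * Z₀ ^ 2)|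
      ≤ (B * (4 * M' ^ 2 * B ^ 2 + 2 * M' ^ 3 * B ^ 2) * Real.exp (4 * M')) * ε ^ 2 := by
  have hZ0pos : 0 < Z₀ := lt_of_lt_of_le (Real.exp_pos _) hZ0l
  have hZepos : 0 < Zε := lt_of_lt_of_le (Real.exp_pos _) hZel
  have hB1 : 1 ≤ B := by rw [hBdef]; exact Real.one_le_exp (by linarith)
  have hBpos : 0 < B := by linarith
  have hM0 : 0 < M' := by linarith
  set N := R * Z₀ ^ 2 - S * Z₀ - ε * (ξx * Z₀ - Z₁) * (ε * Z₁ + S) with hNdef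
  have hNbound : |N| ≤ (4 * M' ^ 2 * B ^ 2 + 2 * M' ^ 3 * B ^ 2) * ε ^ 2 := by
    have t0 : |N| ≤ |R * Z₀ ^ 2| + |S * Z₀| + |ε * (ξx * Z₀ - Z₁) * (ε * Z₁ + S)| :=
      (abs_sub _ _).trans (add_le_add (abs_sub _ _) le_rfl)
    have t1 : |R * Z₀ ^ 2| ≤ (ε ^ 2 * M' ^ 2) * B ^ 2 := by
      rw [abs_mul, abs_pow, abs_of_pos hZ0pos]
      exact mul_le_mul hR (pow_le_pow_left₀ hZ0pos.le hZ0u 2) (by positivity) (by positivity)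
    have t2 : |S * Z₀| ≤ (ε ^ 2 * M' ^ 2 * B) * B := by
      rw [abs_mul, abs_of_pos hZ0pos]
      exact mul_le_mul hS hZ0u hZ0pos.le (by positivity)
    have a1 : |ξx * Z₀ - Z₁| ≤ 2 * (M' * B) := by
      calc |ξx * Z₀ - Z₁| ≤ |ξx * Z₀| + |Z₁| := abs_sub _ _
        _ ≤ M' * B + M' * B := by
            apply add_le_add _ hZ1
            rw [abs_mul, abs_of_pos hZ0pos]
            exact mul_le_mul hξx hZ0u hZ0pos.le hM0.le
        _ = 2 * (M' * B) := by ring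
    have a2 : |ε * Z₁ + S| ≤ |ε| * (M' * B) + ε ^ 2 * M' ^ 2 * B := by
      refine (abs_add_le _ _).trans (add_le_add ?_ hS)
      rw [abs_mul]
      exact mul_le_mul_of_nonneg_left hZ1 (abs_nonneg ε)
    have t3 : |ε * (ξx * Z₀ - Z₁) * (ε * Z₁ + S)|
        ≤ |ε| * (2 * (M' * B)) * (|ε| * (M' * B) + ε ^ 2 * M' ^ 2 * B) := by
      rw [abs_mul, abs_mul]
      exact mul_le_mul (mul_le_mul le_rfl a1 (abs_nonneg _) (abs_nonneg _)) a2
        (abs_nonneg _) (by positivity)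
    have hc : |ε| * ε ^ 2 ≤ ε ^ 2 := by
      nlinarith [sq_nonneg ε, abs_nonneg ε]
    have t3' : |ε| * (2 * (M' * B)) * (|ε| * (M' * B) + ε ^ 2 * M' ^ 2 * B)
        ≤ (2 * M' ^ 2 * B ^ 2 + 2 * M' ^ 3 * B ^ 2) * ε ^ 2 := by
      have e1 : |ε| * (2 * (M' * B)) * (|ε| * (M' * B) + ε ^ 2 * M' ^ 2 * B)
          = 2 * M' ^ 2 * B ^ 2 * (|ε| * |ε|) + 2 * M' ^ 3 * B ^ 2 * (|ε| * ε ^ 2) := by ring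
      have e2 : |ε| * |ε| = ε ^ 2 := by rw [← sq, sq_abs]
      rw [e1, e2]
      have := mul_le_mul_of_nonneg_left hc (by positivity : (0:ℝ) ≤ 2 * M' ^ 3 * B ^ 2)
      linarith
    linarith
  rw [abs_div, abs_mul, Real.abs_exp, abs_of_pos (by positivity : (0:ℝ) < Zε * Z₀ ^ 2)]
  have hdenlb : Real.exp (-(2 * M')) * Real.exp (-M') ^ 2 ≤ Zε * Z₀ ^ 2 := by
    exact mul_le_mul hZel (pow_le_pow_left₀ (Real.exp_pos _).le hZ0l 2) (by positivity) hZepos.le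
  calc Real.exp hx * |N| / (Zε * Z₀ ^ 2)
      ≤ Real.exp hx * |N| / (Real.exp (-(2 * M')) * Real.exp (-M') ^ 2) :=
        div_le_div_of_nonneg_left (by positivity) (by positivity) hdenlb
    _ ≤ B * ((4 * M' ^ 2 * B ^ 2 + 2 * M' ^ 3 * B ^ 2) * ε ^ 2)
          / (Real.exp (-(2 * M')) * Real.exp (-M') ^ 2) := by
        gcongr
        rw [hBdef]; exact Real.exp_le_exp.2 (le_trans (le_abs_self _) hhx)
    _ = (B * (4 * M' ^ 2 * B ^ 2 + 2 * M' ^ 3 * B ^ 2) * Real.exp (4 * M')) * ε ^ 2 := by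
        have hd : Real.exp (-(2 * M')) * Real.exp (-M') ^ 2 = Real.exp (-(4 * M')) := by
          rw [sq, ← Real.exp_add, ← Real.exp_add]
          congr 1; ring
        rw [hd, Real.exp_neg, div_eq_mul_inv, inv_inv]
        ring

/-- **Differential of the exponential-normalization map.**
For a probability measure `ν`, bounded mean-zero `h`, and bounded mean-zero direction `ξ`,
the map `ε ↦ w_{h+εξ}` (with `w_g = e^g / ∫ e^g dν`) is differentiable at `ε = 0`
in `L¹(ν)`, with derivative `w_h · (ξ − E_{ρ_h}[ξ])`, `E_{ρ_h}[ξ] = ∫ ξ w_h dν`. -/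
theorem exp_normalization_hasDerivAt_L1
    {Ω : Type*} [MeasurableSpace Ω] (ν : Measure Ω) [IsProbabilityMeasure ν]
    (h ξ : Ω → ℝ) (hhm : Measurable h) (hξm : Measurable ξ)
    (M : ℝ) (hhb : ∀ x, |h x| ≤ M) (hξb : ∀ x, |ξ x| ≤ M)
    (hh0 : ∫ x, h x ∂ν = 0) (hξ0 : ∫ x, ξ x ∂ν = 0)
    (w : (Ω → ℝ) → Ω → ℝ)
    (hw : ∀ g : Ω → ℝ, w g = fun x => Real.exp (g x) / ∫ y, Real.exp (g y) ∂ν) :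
    Tendsto
      (fun ε : ℝ =>
        (∫ x, |w (fun y => h y + ε * ξ y) x - w h x
            - ε * (w h x * (ξ x - ∫ y, ξ y * w h y ∂ν))| ∂ν) / |ε|)
      (𝓝[≠] (0:ℝ)) (𝓝 0) := by
  set M' : ℝ := |M| + 1 with hM'def
  have hM1 : (1:ℝ) ≤ M' := le_add_of_nonneg_left (abs_nonneg M)
  have hM0 : (0:ℝ) < M' := by linarith
  have hh' : ∀ x, |h x| ≤ M' := fun x => (hhb x).trans ((le_abs_self M).trans (by linarith))
  have hξ' : ∀ x, |ξ x| ≤ M' := fun x => (hξb x).trans ((le_abs_self M).trans (by linarith))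
  set B := Real.exp M' with hBdef
  have hB1 : (1:ℝ) ≤ B := Real.one_le_exp (by linarith)
  have intb : ∀ (f : Ω → ℝ) (C : ℝ), Measurable f → (∀ x, |f x| ≤ C) → Integrable f ν := by
    intro f C hf hC
    exact (integrable_const C).mono' hf.aestronglyMeasurable
      (ae_of_all _ fun x => by simpa [Real.norm_eq_abs] using hC x)
  have hexph : ∀ x, |Real.exp (h x)| ≤ B := fun x => by
    rw [Real.abs_exp]; exact Real.exp_le_exp.2 ((le_abs_self _).trans (hh' x))
  have inth : Integrable (fun x => Real.exp (h x)) ν := intb _ B hhm.exp hexph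
  have intξh : Integrable (fun x => ξ x * Real.exp (h x)) ν :=
    intb _ (M' * B) (hξm.mul hhm.exp) (fun x => by
      rw [abs_mul]
      exact mul_le_mul (hξ' x) (hexph x) (abs_nonneg _) hM0.le)
  set Z₀ := ∫ x, Real.exp (h x) ∂ν with hZ0def
  set Z₁ := ∫ x, ξ x * Real.exp (h x) ∂ν with hZ1def
  have hZ0l : Real.exp (-M') ≤ Z₀ := by
    have e0 : ∫ (_ : Ω), Real.exp (-M') ∂ν = Real.exp (-M') := by simp
    rw [← e0, hZ0def]
    refine integral_mono (integrable_const _) inth fun x => ?_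
    exact Real.exp_le_exp.2 (by have := (abs_le.1 (hh' x)).1; linarith)
  have hZ0u : Z₀ ≤ B := by
    have e0 : ∫ (_ : Ω), B ∂ν = B := by simp
    rw [← e0, hZ0def]
    exact integral_mono inth (integrable_const _) fun x => (le_abs_self _).trans (hexph x)
  have hZ0pos : 0 < Z₀ := lt_of_lt_of_le (Real.exp_pos _) hZ0l
  have hZ1b : |Z₁| ≤ M' * B := by
    have := norm_integral_le_of_norm_le_const (μ := ν)
      (f := fun x => ξ x * Real.exp (h x)) (C := M' * B)
      (ae_of_all _ fun x => by
        rw [Real.norm_eq_abs, abs_mul]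
        exact mul_le_mul (hξ' x) (hexph x) (abs_nonneg _) hM0.le)
    simpa [Real.norm_eq_abs, measure_univ] using this
  have hE : (∫ y, ξ y * w h y ∂ν) = Z₁ / Z₀ := by
    rw [hw]
    simp only
    simp_rw [← mul_div_assoc]
    rw [integral_div]
  set K := B * (4 * M' ^ 2 * B ^ 2 + 2 * M' ^ 3 * B ^ 2) * Real.exp (4 * M') with hKdef
  have hKpos : 0 < K := by
    have := Real.exp_pos (4 * M'); positivity
  have key : ∀ ε : ℝ, |ε| ≤ 1 / M' →
      (∫ x, |w (fun y => h y + ε * ξ y) x - w h x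
          - ε * (w h x * (ξ x - ∫ y, ξ y * w h y ∂ν))| ∂ν) ≤ K * ε ^ 2 := by
    intro ε hεM
    have hε1 : |ε| ≤ 1 := hεM.trans (by rw [div_le_one hM0]; exact hM1)
    have hεξ : ∀ x, |ε * ξ x| ≤ 1 := fun x => by
      rw [abs_mul]
      calc |ε| * |ξ x| ≤ (1 / M') * M' :=
            mul_le_mul hεM (hξ' x) (abs_nonneg _) (by positivity)
        _ = 1 := by field_simp
    set R : Ω → ℝ := fun x => Real.exp (ε * ξ x) - 1 - ε * ξ x with hRdef
    have hRb : ∀ x, |R x| ≤ ε ^ 2 * M' ^ 2 := fun x => by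
      refine (Real.abs_exp_sub_one_sub_id_le (hεξ x)).trans ?_
      have e1 : (ε * ξ x) ^ 2 = ε ^ 2 * (ξ x) ^ 2 := by ring
      rw [e1]
      refine mul_le_mul_of_nonneg_left ?_ (sq_nonneg ε)
      calc (ξ x) ^ 2 = |ξ x| ^ 2 := (sq_abs _).symm
        _ ≤ M' ^ 2 := pow_le_pow_left₀ (abs_nonneg _) (hξ' x) 2
    have hgb : ∀ x, |h x + ε * ξ x| ≤ 2 * M' := fun x =>
      (abs_add_le _ _).trans (by have := (hεξ x).trans hM1; have := hh' x; linarith)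
    have hgm : Measurable fun x => h x + ε * ξ x := hhm.add (measurable_const.mul hξm)
    have intg : Integrable (fun x => Real.exp (h x + ε * ξ x)) ν :=
      intb _ (Real.exp (2 * M')) hgm.exp (fun x => by
        rw [Real.abs_exp]; exact Real.exp_le_exp.2 ((le_abs_self _).trans (hgb x)))
    set Zε := ∫ x, Real.exp (h x + ε * ξ x) ∂ν with hZedef
    have hZel : Real.exp (-(2 * M')) ≤ Zε := by
      have e0 : ∫ (_ : Ω), Real.exp (-(2 * M')) ∂ν = Real.exp (-(2 * M')) := by simp
      rw [← e0, hZedef]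
      refine integral_mono (integrable_const _) intg fun x => ?_
      exact Real.exp_le_exp.2 (by have := (abs_le.1 (hgb x)).1; linarith)
    have hZepos : 0 < Zε := lt_of_lt_of_le (Real.exp_pos _) hZel
    set S := Zε - Z₀ - ε * Z₁ with hSdef
    have hSeq : S = ∫ x, Real.exp (h x) * R x ∂ν := by
      have e1 : ∀ x, Real.exp (h x) * R x
          = Real.exp (h x + ε * ξ x) - Real.exp (h x) - ε * (ξ x * Real.exp (h x)) := by
        intro x; simp only [hRdef, Real.exp_add]; ring
      have e2 : (fun x => Real.exp (h x) * R x)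
          = fun x => Real.exp (h x + ε * ξ x) - Real.exp (h x) - ε * (ξ x * Real.exp (h x)) :=
        funext e1
      have i1 : Integrable (fun x => Real.exp (h x + ε * ξ x) - Real.exp (h x)) ν :=
        intg.sub inth
      have i2 : Integrable (fun x => ε * (ξ x * Real.exp (h x))) ν := intξh.const_mul ε
      rw [hSdef, e2]
      rw [show (fun x => Real.exp (h x + ε * ξ x) - Real.exp (h x) - ε * (ξ x * Real.exp (h x)))
          = fun x => (Real.exp (h x + ε * ξ x) - Real.exp (h x)) - ε * (ξ x * Real.exp (h x))
          from rfl]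
      rw [integral_sub i1 i2, integral_sub intg inth, integral_const_mul]
    have hSb : |S| ≤ ε ^ 2 * M' ^ 2 * B := by
      rw [hSeq]
      have := norm_integral_le_of_norm_le_const (μ := ν)
        (f := fun x => Real.exp (h x) * R x) (C := ε ^ 2 * M' ^ 2 * B)
        (ae_of_all _ fun x => by
          rw [Real.norm_eq_abs, abs_mul, Real.abs_exp]
          calc Real.exp (h x) * |R x| ≤ B * (ε ^ 2 * M' ^ 2) := by
                refine mul_le_mul ?_ (hRb x) (abs_nonneg _) (by positivity)
                exact Real.exp_le_exp.2 ((le_abs_self _).trans (hh' x))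
            _ = ε ^ 2 * M' ^ 2 * B := by ring)
      simpa [Real.norm_eq_abs, measure_univ] using this
    have hpt : ∀ x, |w (fun y => h y + ε * ξ y) x - w h x
        - ε * (w h x * (ξ x - ∫ y, ξ y * w h y ∂ν))| ≤ K * ε ^ 2 := by
      intro x
      have hid : w (fun y => h y + ε * ξ y) x - w h x
          - ε * (w h x * (ξ x - ∫ y, ξ y * w h y ∂ν))
          = Real.exp (h x) * (R x * Z₀ ^ 2 - S * Z₀ - ε * (ξ x * Z₀ - Z₁) * (ε * Z₁ + S))
            / (Zε * Z₀ ^ 2) := by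
        rw [hE, hw, hw]
        simp only [hRdef, hSdef]
        rw [← hZedef, ← hZ0def, Real.exp_add]
        field_simp
        ring
      rw [hid]
      exact exp_norm_scalar_bound M' B ε Z₀ Z₁ Zε (ξ x) (h x) (R x) S hM1 hBdef hε1
        (hRb x) hSb hZ0l hZ0u hZ1b hZel (hξ' x) (hh' x)
    calc (∫ x, |w (fun y => h y + ε * ξ y) x - w h x
            - ε * (w h x * (ξ x - ∫ y, ξ y * w h y ∂ν))| ∂ν)
        ≤ ∫ _, K * ε ^ 2 ∂ν :=
          integral_mono_of_nonneg (ae_of_all _ fun x => abs_nonneg _)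
            (integrable_const _) (ae_of_all _ hpt)
      _ = K * ε ^ 2 := by simp
  have hδpos : (0:ℝ) < 1 / M' := by positivity
  refine squeeze_zero' (g := fun ε => K * |ε|) (Filter.Eventually.of_forall fun ε =>
    div_nonneg (integral_nonneg fun x => abs_nonneg _) (abs_nonneg _)) ?_ ?_
  · have hmem : {ε : ℝ | |ε| ≤ 1 / M'} ∈ 𝓝[≠] (0:ℝ) := by
      apply mem_nhdsWithin_of_mem_nhds
      have := Metric.closedBall_mem_nhds (0:ℝ) hδpos
      simpa [Metric.closedBall, Real.dist_eq] using this
    filter_upwards [hmem, self_mem_nhdsWithin] with ε hε hεne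
    have hεne' : |ε| ≠ 0 := abs_ne_zero.2 hεne
    have h1 := key ε hε
    calc (∫ x, |w (fun y => h y + ε * ξ y) x - w h x
            - ε * (w h x * (ξ x - ∫ y, ξ y * w h y ∂ν))| ∂ν) / |ε|
        ≤ (K * ε ^ 2) / |ε| := by gcongr
      _ = K * |ε| := by
          have e3 : ε ^ 2 = |ε| * |ε| := by rw [← sq_abs]; ring
          rw [e3, ← mul_assoc, mul_div_assoc, div_self hεne', mul_one]
  · have : Tendsto (fun ε : ℝ => K * |ε|) (𝓝 0) (𝓝 (K * |0|)) :=
      (continuous_const.mul continuous_abs).tendsto 0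
    simpa using this.mono_left nhdsWithin_le_nhds
end

section
/- Let ν₀ be a probability measure and h : [0,T] → L^∞(ν₀) a C¹ path (in the L^∞ norm) with each h(t) mean-zero. Set ρ_t the probability measure with density w_{h(t)} = e^{h(t)} / ∫ e^{h(t)} dν₀. Then for each t, ∂_t log w_{h(t)} = ḣ(t) − E_{ρ_t}[ḣ(t)], where E_{ρ_t}[ḣ(t)] = ∫ ḣ(t) w_{h(t)} dν₀. -/
open MeasureTheory Filter Topology

/-- **Log-density evolution along coordinate paths.**
If `t ↦ h(t)` is a C¹ path into `L^∞(ν)` of mean-zero bounded functions, and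
`ρ_t` has density `w_{h(t)} = e^{h(t)}/∫ e^{h(t)} dν`, then
`∂_t log w_{h(t)} = ḣ(t) − E_{ρ_t}[ḣ(t)]`, the derivative taken in `L^∞(ν)`. -/
theorem log_density_evolution
    {Ω : Type*} [MeasurableSpace Ω] (ν : Measure Ω) [IsProbabilityMeasure ν]
    (T : ℝ) (h hd : ℝ → Ω → ℝ)
    (hmeas : ∀ t, Measurable (h t)) (hdmeas : ∀ t, Measurable (hd t))
    (M : ℝ) (hb : ∀ t x, |h t x| ≤ M) (hdb : ∀ t x, |hd t x| ≤ M)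
    (hmean : ∀ t, ∫ x, h t x ∂ν = 0)
    (w : (Ω → ℝ) → Ω → ℝ)
    (hw : ∀ g : Ω → ℝ, w g = fun x => Real.exp (g x) / ∫ y, Real.exp (g y) ∂ν)
    (t : ℝ) (ht : t ∈ Set.Icc 0 T)
    (hC1 : Tendsto (fun ε : ℝ =>
        eLpNorm (fun x => h (t + ε) x - h t x - ε * hd t x) ⊤ ν / ENNReal.ofReal |ε|)
        (𝓝[≠] (0:ℝ)) (𝓝 0)) :
    Tendsto (fun ε : ℝ =>
        eLpNorm (fun x => Real.log (w (h (t + ε)) x) - Real.log (w (h t) x)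
          - ε * (hd t x - ∫ y, hd t y * w (h t) y ∂ν)) ⊤ ν / ENNReal.ofReal |ε|)
        (𝓝[≠] (0:ℝ)) (𝓝 0) := by
  classical
  -- basic facts
  have hν0 : ν ≠ 0 := IsProbabilityMeasure.ne_zero ν
  have hΩ : Nonempty Ω := by
    by_contra hne
    rw [not_nonempty_iff] at hne
    have : ν Set.univ = 1 := measure_univ
    simp [Set.univ_eq_empty_iff.2 hne] at this
  obtain ⟨x₀⟩ := hΩ
  have hM0 : 0 ≤ M := le_trans (abs_nonneg _) (hb 0 x₀)
  -- partition function
  obtain ⟨Z, hZ⟩ : ∃ Z : ℝ → ℝ, ∀ s, Z s = ∫ y, Real.exp (h s y) ∂ν := ⟨_, fun _ => rfl⟩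
  have hexp_int : ∀ s, Integrable (fun y => Real.exp (h s y)) ν := by
    intro s
    refine ⟨((hmeas s).exp).aestronglyMeasurable, ?_⟩
    refine HasFiniteIntegral.of_bounded (C := Real.exp M) ?_
    filter_upwards with x
    rw [Real.norm_eq_abs, abs_of_pos (Real.exp_pos _)]
    exact Real.exp_le_exp.2 ((le_abs_self _).trans (hb s x))
  have hZpos : ∀ s, 0 < Z s := by
    intro s
    have h1 : Real.exp (-M) ≤ Z s := by
      rw [hZ]
      have := integral_mono (integrable_const (Real.exp (-M))) (hexp_int s)
        (fun x => Real.exp_le_exp.2 (neg_le_of_abs_le (hb s x)))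
      simpa using this
    linarith [Real.exp_pos (-M)]
  obtain ⟨D, hD⟩ : ∃ D : ℝ, D = ∫ y, Real.exp (h t y) * hd t y ∂ν := ⟨_, rfl⟩
  have hD_int : Integrable (fun y => Real.exp (h t y) * hd t y) ν := by
    refine ⟨(((hmeas t).exp).mul (hdmeas t)).aestronglyMeasurable, ?_⟩
    refine HasFiniteIntegral.of_bounded (C := Real.exp M * M) ?_
    filter_upwards with x
    rw [Real.norm_eq_abs, abs_mul, abs_of_pos (Real.exp_pos _)]
    exact mul_le_mul (Real.exp_le_exp.2 ((le_abs_self _).trans (hb t x))) (hdb t x)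
      (abs_nonneg _) (Real.exp_pos _).le
  -- the residual of the C¹ hypothesis
  obtain ⟨r, hr⟩ : ∃ r : ℝ → Ω → ℝ,
      ∀ ε, r ε = fun x => h (t + ε) x - h t x - ε * hd t x := ⟨_, fun _ => rfl⟩
  have hr_meas : ∀ ε, Measurable (r ε) := by
    intro ε; rw [hr]
    exact ((hmeas (t + ε)).sub (hmeas t)).sub ((hdmeas t).const_mul ε)
  have hNfin : ∀ ε, eLpNorm (r ε) ⊤ ν ≠ ⊤ := by
    intro ε
    rw [eLpNorm_exponent_top]
    refine (eLpNormEssSup_lt_top_of_ae_bound (C := 2 * M + |ε| * M) ?_).ne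
    filter_upwards with x
    rw [hr, Real.norm_eq_abs]
    have h1 : |h (t + ε) x - h t x - ε * hd t x|
        ≤ |h (t + ε) x| + |h t x| + |ε * hd t x| := by
      calc |h (t + ε) x - h t x - ε * hd t x|
          = |h (t + ε) x + -(h t x) + -(ε * hd t x)| := by ring_nf
        _ ≤ |h (t + ε) x| + |-(h t x)| + |-(ε * hd t x)| := abs_add_three _ _ _
        _ = |h (t + ε) x| + |h t x| + |ε * hd t x| := by rw [abs_neg, abs_neg]
    have h2 : |ε * hd t x| ≤ |ε| * M := by
      rw [abs_mul]
      exact mul_le_mul_of_nonneg_left (hdb t x) (abs_nonneg _)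
    have := hb (t + ε) x
    have := hb t x
    linarith
  obtain ⟨n, hn⟩ : ∃ n : ℝ → ℝ, ∀ ε, n ε = (eLpNorm (r ε) ⊤ ν).toReal := ⟨_, fun _ => rfl⟩
  have hn_nonneg : ∀ ε, 0 ≤ n ε := fun ε => by rw [hn]; exact ENNReal.toReal_nonneg
  have hr_ae : ∀ ε, ∀ᵐ x ∂ν, |r ε x| ≤ n ε := by
    intro ε
    have hfin : eLpNormEssSup (r ε) ν ≠ ⊤ := by
      rw [← eLpNorm_exponent_top]; exact hNfin ε
    filter_upwards [ae_le_eLpNormEssSup (f := r ε) (μ := ν)] with x hx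
    have h2 := ENNReal.toReal_mono hfin hx
    rw [hn, eLpNorm_exponent_top]
    simpa [Real.norm_eq_abs] using h2
  obtain ⟨m, hm⟩ : ∃ m : ℝ → ℝ, ∀ ε, m ε = n ε / |ε| := ⟨_, fun _ => rfl⟩
  have hm_nonneg : ∀ ε, 0 ≤ m ε := fun ε => by
    rw [hm]; exact div_nonneg (hn_nonneg ε) (abs_nonneg _)
  have hm0 : Tendsto m (𝓝[≠] (0:ℝ)) (𝓝 0) := by
    have h0 := (ENNReal.tendsto_toReal (by simp : (0:ENNReal) ≠ ⊤)).comp hC1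
    simp only [Function.comp_def, ENNReal.toReal_zero] at h0
    refine h0.congr fun ε => ?_
    rw [← hr ε, ENNReal.toReal_div, ENNReal.toReal_ofReal (abs_nonneg _), ← hn, ← hm]
  have habs0 : Tendsto (fun ε : ℝ => |ε|) (𝓝[≠] (0:ℝ)) (𝓝 0) := by
    have : Tendsto (fun ε : ℝ => |ε|) (𝓝 (0:ℝ)) (𝓝 |0|) :=
      (continuous_abs).tendsto 0
    simpa using this.mono_left nhdsWithin_le_nhds
  -- derivative of the partition function
  have hZD : HasDerivAt (fun ε => Z (t + ε)) D 0 := by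
    rw [hasDerivAt_iff_tendsto]
    have hmain : Tendsto (fun ε => ‖ε - 0‖⁻¹ * ‖Z (t + ε) - Z (t + 0) - (ε - 0) • D‖)
        (𝓝[≠] (0:ℝ)) (𝓝 0) := by
      have hev1 : ∀ᶠ ε in 𝓝[≠] (0:ℝ), m ε < 1 := hm0.eventually_lt_const one_pos
      have hmul : Tendsto (fun ε : ℝ => |ε| * (M + 1)) (𝓝[≠] (0:ℝ)) (𝓝 0) := by
        simpa using habs0.mul_const (M + 1)
      have hev2 : ∀ᶠ ε in 𝓝[≠] (0:ℝ), |ε| * (M + 1) < 1 :=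
        hmul.eventually_lt_const one_pos
      have hub : ∀ᶠ ε in 𝓝[≠] (0:ℝ),
          ‖ε - 0‖⁻¹ * ‖Z (t + ε) - Z (t + 0) - (ε - 0) • D‖
            ≤ Real.exp M * (|ε| * (M + 1) ^ 2 + m ε) := by
        filter_upwards [hev1, hev2, self_mem_nhdsWithin] with ε hm1 hsmall hεne
        have hε : ε ≠ 0 := hεne
        have hεpos : 0 < |ε| := abs_pos.2 hε
        have hnle : n ε ≤ |ε| := by
          rw [hm, div_lt_one hεpos] at hm1
          exact hm1.le
        -- rewrite the difference as an integral
        have i1 := hexp_int (t + ε)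
        have i2 := hexp_int t
        have i3 := hD_int.const_mul ε
        have hint_eq : Z (t + ε) - Z (t + 0) - (ε - 0) • D
            = ∫ x, (Real.exp (h (t + ε) x) - Real.exp (h t x)
                - ε * (Real.exp (h t x) * hd t x)) ∂ν := by
          have i12 : Integrable (fun y => Real.exp (h (t + ε) y) - Real.exp (h t y)) ν :=
            i1.sub i2
          have e3 : ∫ x, (Real.exp (h (t + ε) x) - Real.exp (h t x)
                - ε * (Real.exp (h t x) * hd t x)) ∂ν
              = (∫ x, (Real.exp (h (t + ε) x) - Real.exp (h t x)) ∂ν)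
                - ∫ x, ε * (Real.exp (h t x) * hd t x) ∂ν := integral_sub i12 i3
          have e4 : ∫ x, (Real.exp (h (t + ε) x) - Real.exp (h t x)) ∂ν
              = (∫ x, Real.exp (h (t + ε) x) ∂ν) - ∫ x, Real.exp (h t x) ∂ν :=
            integral_sub i1 i2
          rw [add_zero, sub_zero, smul_eq_mul, hZ, hZ, hD, e3, e4, integral_const_mul]
        -- a.e. bound on the integrand
        have hae : ∀ᵐ x ∂ν, ‖Real.exp (h (t + ε) x) - Real.exp (h t x)
            - ε * (Real.exp (h t x) * hd t x)‖
            ≤ Real.exp M * (ε ^ 2 * (M + 1) ^ 2 + n ε) := by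
          filter_upwards [hr_ae ε] with x hx
          have hΔ : |h (t + ε) x - h t x| ≤ |ε| * (M + 1) := by
            have h1 : h (t + ε) x - h t x = r ε x + ε * hd t x := by rw [hr]; ring
            rw [h1]
            calc |r ε x + ε * hd t x| ≤ |r ε x| + |ε * hd t x| := abs_add_le _ _
              _ ≤ n ε + |ε| * M := by
                  refine add_le_add hx ?_
                  rw [abs_mul]
                  exact mul_le_mul_of_nonneg_left (hdb t x) (abs_nonneg _)
              _ ≤ |ε| + |ε| * M := by linarith
              _ = |ε| * (M + 1) := by ring
          have hΔ1 : |h (t + ε) x - h t x| ≤ 1 := hΔ.trans hsmall.le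
          have hexp1 : |Real.exp (h (t + ε) x - h t x) - 1 - (h (t + ε) x - h t x)|
              ≤ (h (t + ε) x - h t x) ^ 2 := Real.abs_exp_sub_one_sub_id_le hΔ1
          have hg : Real.exp (h (t + ε) x) - Real.exp (h t x)
              - ε * (Real.exp (h t x) * hd t x)
              = Real.exp (h t x) * ((Real.exp (h (t + ε) x - h t x) - 1
                  - (h (t + ε) x - h t x)) + r ε x) := by
            have he : Real.exp (h (t + ε) x)
                = Real.exp (h t x) * Real.exp (h (t + ε) x - h t x) := by
              rw [← Real.exp_add]; ring_nf
            rw [he, hr]; ring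
          rw [hg, Real.norm_eq_abs, abs_mul, abs_of_pos (Real.exp_pos _)]
          have hexpM : Real.exp (h t x) ≤ Real.exp M :=
            Real.exp_le_exp.2 ((le_abs_self _).trans (hb t x))
          have hΔ2 : (h (t + ε) x - h t x) ^ 2 ≤ ε ^ 2 * (M + 1) ^ 2 := by
            have h2 : (h (t + ε) x - h t x) ^ 2 ≤ (|ε| * (M + 1)) ^ 2 := by
              rw [← sq_abs (h (t + ε) x - h t x)]
              exact pow_le_pow_left₀ (abs_nonneg _) hΔ 2
            calc (h (t + ε) x - h t x) ^ 2 ≤ (|ε| * (M + 1)) ^ 2 := h2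
              _ = ε ^ 2 * (M + 1) ^ 2 := by rw [mul_pow, sq_abs]
          have habs1 : |(Real.exp (h (t + ε) x - h t x) - 1
              - (h (t + ε) x - h t x)) + r ε x|
              ≤ ε ^ 2 * (M + 1) ^ 2 + n ε :=
            (abs_add_le _ _).trans (add_le_add (hexp1.trans hΔ2) hx)
          exact mul_le_mul hexpM habs1 (abs_nonneg _) (Real.exp_pos _).le
        have key := norm_integral_le_of_norm_le_const hae
        rw [probReal_univ, mul_one] at key
        rw [hint_eq]
        have hmono : ‖ε - 0‖⁻¹ * ‖∫ x, (Real.exp (h (t + ε) x) - Real.exp (h t x)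
            - ε * (Real.exp (h t x) * hd t x)) ∂ν‖
            ≤ |ε|⁻¹ * (Real.exp M * (ε ^ 2 * (M + 1) ^ 2 + n ε)) := by
          rw [sub_zero, Real.norm_eq_abs]
          exact mul_le_mul_of_nonneg_left key (inv_nonneg.2 (abs_nonneg _))
        refine hmono.trans (le_of_eq ?_)
        rw [hm, show ε ^ 2 = |ε| * |ε| by rw [← sq_abs]; ring, div_eq_inv_mul]
        have hcancel : |ε|⁻¹ * |ε| = 1 := inv_mul_cancel₀ hεpos.ne'
        calc |ε|⁻¹ * (Real.exp M * (|ε| * |ε| * (M + 1) ^ 2 + n ε))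
            = Real.exp M * ((|ε|⁻¹ * |ε|) * |ε| * (M + 1) ^ 2 + |ε|⁻¹ * n ε) := by ring
          _ = Real.exp M * (|ε| * (M + 1) ^ 2 + |ε|⁻¹ * n ε) := by rw [hcancel]; ring
      refine squeeze_zero' (Eventually.of_forall fun ε => by positivity) hub ?_
      have := ((habs0.mul_const ((M + 1) ^ 2)).add hm0).const_mul (Real.exp M)
      simpa using this
    have hpure : Tendsto (fun ε => ‖ε - 0‖⁻¹ * ‖Z (t + ε) - Z (t + 0) - (ε - 0) • D‖)
        (pure (0:ℝ)) (𝓝 0) := by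
      rw [tendsto_pure_left]
      intro s hs
      have h0 : ‖(0:ℝ) - 0‖⁻¹ * ‖Z (t + 0) - Z (t + 0) - ((0:ℝ) - 0) • D‖ = 0 := by simp
      rw [h0]
      exact mem_of_mem_nhds hs
    have hT := tendsto_sup.2 ⟨hmain, hpure⟩
    rwa [nhdsNE_sup_pure] at hT
  -- derivative of the log-partition function
  have hZt0 : Z (t + 0) ≠ 0 := (hZpos (t + 0)).ne'
  have hlogD := hZD.log hZt0
  rw [hasDerivAt_iff_tendsto] at hlogD
  simp only [add_zero, sub_zero, smul_eq_mul] at hlogD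
  -- hlogD : Tendsto (fun ε => ‖ε‖⁻¹ * ‖log (Z (t+ε)) - log (Z t) - ε * (D / Z t)‖) (𝓝 0) (𝓝 0)
  obtain ⟨c, hc⟩ : ∃ c : ℝ → ℝ,
      ∀ ε, c ε = Real.log (Z (t + ε)) - Real.log (Z t) - ε * (D / Z t) :=
    ⟨_, fun _ => rfl⟩
  have hc0 : Tendsto (fun ε => |ε|⁻¹ * |c ε|) (𝓝[≠] (0:ℝ)) (𝓝 0) := by
    refine ((hlogD.mono_left nhdsWithin_le_nhds).congr fun ε => ?_)
    rw [hc, Real.norm_eq_abs, Real.norm_eq_abs]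
  -- identify the mean
  have hI : (∫ y, hd t y * w (h t) y ∂ν) = D / Z t := by
    have hpt : ∀ y, hd t y * w (h t) y = (Real.exp (h t y) * hd t y) / Z t := by
      intro y
      rw [hw]
      show hd t y * (Real.exp (h t y) / ∫ z, Real.exp (h t z) ∂ν) = _
      rw [← hZ]; ring
    simp_rw [hpt]
    rw [integral_div, ← hD]
  -- pointwise identity for the log densities
  have hlogw : ∀ (s : ℝ) (x : Ω), Real.log (w (h s) x) = h s x - Real.log (Z s) := by
    intro s x
    rw [hw]
    show Real.log (Real.exp (h s x) / ∫ z, Real.exp (h s z) ∂ν) = _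
    rw [← hZ, Real.log_div (Real.exp_ne_zero _) (hZpos s).ne', Real.log_exp]
  have heq : ∀ ε : ℝ, (fun x => Real.log (w (h (t + ε)) x) - Real.log (w (h t) x)
          - ε * (hd t x - ∫ y, hd t y * w (h t) y ∂ν)) = fun x => r ε x - c ε := by
    intro ε
    funext x
    rw [hI, hlogw, hlogw, hr, hc]
    ring
  -- assemble
  refine tendsto_of_tendsto_of_tendsto_of_le_of_le'
    (g := fun _ : ℝ => (0:ENNReal))
    (h := fun ε : ℝ => eLpNorm (fun x => h (t + ε) x - h t x - ε * hd t x) ⊤ ν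
        / ENNReal.ofReal |ε| + ENNReal.ofReal (|ε|⁻¹ * |c ε|))
    tendsto_const_nhds ?_ (Eventually.of_forall fun ε => zero_le) ?_
  · have h2 := ENNReal.tendsto_ofReal (a := 0) hc0
    rw [ENNReal.ofReal_zero] at h2
    simpa using hC1.add h2
  · filter_upwards [self_mem_nhdsWithin] with ε hεne
    have hε : ε ≠ 0 := hεne
    have hεpos : 0 < |ε| := abs_pos.2 hε
    rw [heq ε]
    have hsub : eLpNorm (fun x => r ε x - c ε) ⊤ ν
        ≤ eLpNorm (r ε) ⊤ ν + ENNReal.ofReal |c ε| := by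
      have h1 := eLpNorm_add_le (μ := ν) (p := ⊤) ((hr_meas ε).aestronglyMeasurable)
        (aestronglyMeasurable_const (b := -c ε)) (le_top : (1:ENNReal) ≤ ⊤)
      have h2 : eLpNorm (fun _ : Ω => -c ε) ⊤ ν = ENNReal.ofReal |c ε| := by
        rw [eLpNorm_exponent_top, eLpNormEssSup_const _ hν0, ← ofReal_norm]
        simp [Real.norm_eq_abs]
      calc eLpNorm (fun x => r ε x - c ε) ⊤ ν
          = eLpNorm ((fun x => r ε x) + fun _ => -c ε) ⊤ ν := by
            first
            | rfl
            | (congr 1; funext x; simp [sub_eq_add_neg])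
            | congr 1
        _ ≤ eLpNorm (r ε) ⊤ ν + eLpNorm (fun _ : Ω => -c ε) ⊤ ν := h1
        _ = eLpNorm (r ε) ⊤ ν + ENNReal.ofReal |c ε| := by rw [h2]
    calc eLpNorm (fun x => r ε x - c ε) ⊤ ν / ENNReal.ofReal |ε|
        ≤ (eLpNorm (r ε) ⊤ ν + ENNReal.ofReal |c ε|) / ENNReal.ofReal |ε| :=
          ENNReal.div_le_div_right hsub _
      _ = eLpNorm (r ε) ⊤ ν / ENNReal.ofReal |ε|
          + ENNReal.ofReal |c ε| / ENNReal.ofReal |ε| := ENNReal.add_div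
      _ = eLpNorm (fun x => h (t + ε) x - h t x - ε * hd t x) ⊤ ν / ENNReal.ofReal |ε|
          + ENNReal.ofReal (|ε|⁻¹ * |c ε|) := by
          rw [hr, ← ENNReal.ofReal_div_of_pos hεpos, div_eq_inv_mul]
end
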